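/- Let X ⊂ P^m be a nondegenerate subvariety of dimension n, and Γ ⊂ P^N × X × P^m the subscheme defined by ℓ(v) ∧ w = 0 (the closed graph of the universal linear map). Then for α ∈ P^N the fibre Γ_α equals Γ(α) ∪ (C_α × P^m), where Γ(α) is the closed graph of α|_X and C_α is the trace on X of the center of α; moreover Γ_α = Γ(α) if and only if C_α = ∅. -/
import Mathlib


noncomputable section

open MvPolynomial

/-- Complex projective space with homogeneous coordinates indexed by `ι`. -/
abbrev PS (ι : Type) : Type := Projectivization ℂ (ι → ℂ)

/-- Zariski closed subsets of projective space: common zero loci of sets of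
homogeneous polynomials.  (Membership is tested on the chosen representative
`x.rep`; this is independent of the representative since the polynomials are
homogeneous.) -/
def IsZarClosed {ι : Type} [Fintype ι] (s : Set (PS ι)) : Prop :=
  ∃ T : Set (MvPolynomial ι ℂ),
    (∀ p ∈ T, ∃ d, p.IsHomogeneous d) ∧
    s = {x : PS ι | ∀ p ∈ T, eval x.rep p = 0}

/-- The Zariski topology on projective space. -/
instance zariskiTopology (ι : Type) [Fintype ι] : TopologicalSpace (PS ι) :=
  TopologicalSpace.ofClosed {s | IsZarClosed s}
    (by
      refine ⟨{1}, ?_, ?_⟩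
      · intro p hp
        rw [Set.mem_singleton_iff] at hp
        exact ⟨0, hp ▸ isHomogeneous_one ι ℂ⟩
      · ext x
        simp)
    (by
      intro A hA
      refine ⟨⋃ (s : A), (hA s.2).choose, ?_, ?_⟩
      · intro p hp
        simp only [Set.mem_iUnion] at hp
        obtain ⟨s, hs⟩ := hp
        exact (hA s.2).choose_spec.1 p hs
      · ext x
        simp only [Set.mem_sInter, Set.mem_setOf_eq, Set.mem_iUnion]
        constructor
        · rintro hx p ⟨s, hp⟩
          have h2 := (hA s.2).choose_spec.2
          have hxs := hx s.1 s.2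
          rw [h2] at hxs
          exact hxs p hp
        · intro hx s hs
          rw [(hA hs).choose_spec.2]
          intro p hp
          exact hx p ⟨⟨s, hs⟩, hp⟩)
    (by
      intro a ha b hb
      refine ⟨Set.image2 (· * ·) ha.choose hb.choose, ?_, ?_⟩
      · rintro r ⟨p, hp, q, hq, rfl⟩
        obtain ⟨d1, h1⟩ := ha.choose_spec.1 p hp
        obtain ⟨d2, h2⟩ := hb.choose_spec.1 q hq
        exact ⟨d1 + d2, h1.mul h2⟩
      · ext x
        constructor
        · rintro (hx | hx) r ⟨p, hp, q, hq, rfl⟩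
          · rw [ha.choose_spec.2] at hx
            simp [map_mul, hx p hp]
          · rw [hb.choose_spec.2] at hx
            simp [map_mul, hx q hq]
        · intro hx
          by_cases hxa : x ∈ a
          · exact Or.inl hxa
          · refine Or.inr ?_
            rw [hb.choose_spec.2]
            intro q hq
            rw [ha.choose_spec.2] at hxa
            simp only [Set.mem_setOf_eq, not_forall] at hxa
            obtain ⟨p, hp, hpe⟩ := hxa
            have := hx (p * q) ⟨p, hp, q, hq, rfl⟩
            rw [map_mul] at this
            exact (mul_eq_zero.1 this).resolve_left hpe)

/-- `ℙ^m` with its `m+1` homogeneous coordinates. -/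
abbrev Pm (m : ℕ) := PS (Fin (m + 1))

/-- `ℙ^N = ℙ(End(V))`, `N = (m+1)² - 1`: the space of linear rational maps
`ℙ^m ⇢ ℙ^m`, i.e. the projectivization of the space of `(m+1) × (m+1)` matrices. -/
abbrev PN (m : ℕ) := PS (Fin (m + 1) × Fin (m + 1))

/-- The endomorphism `ℓ` represented by `α ∈ ℙ(End V)` applied to a vector `v`. -/
def act (m : ℕ) (α : PN m) (v : Fin (m + 1) → ℂ) : Fin (m + 1) → ℂ :=
  fun i => ∑ j, α.rep (i, j) * v j

/-- The trace `C_α` on `X` of the center of the linear projection `α`: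
the points `[v] ∈ X` with `ℓ(v) = 0`. -/
def center (m : ℕ) (X : Set (Pm m)) (α : PN m) : Set (Pm m) :=
  {x ∈ X | act m α x.rep = 0}

/-- `maps m α x y` : the linear rational map `α` is defined at `x` and sends `x` to `y`. -/
def maps (m : ℕ) (α : PN m) (x y : Pm m) : Prop :=
  ∃ h : act m α x.rep ≠ 0, y = Projectivization.mk ℂ (act m α x.rep) h

/-- The (set-theoretic) image `α(X ∖ C_α)`. -/
def imageSet (m : ℕ) (X : Set (Pm m)) (α : PN m) : Set (Pm m) :=
  {y | ∃ x ∈ X, maps m α x y}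

/-- The fibre of `α : X ⇢ ℙ^m` over `y`. -/
def fibre (m : ℕ) (X : Set (Pm m)) (α : PN m) (y : Pm m) : Set (Pm m) :=
  {x ∈ X | maps m α x y}

/-- `α : X ⇢ closure (α(X))` is (dominant onto its closed image and) of finite
degree: over a nonempty Zariski-open subset of the image, all fibres are finite. -/
def HasFiniteDegree (m : ℕ) (X : Set (Pm m)) (α : PN m) : Prop :=
  ∃ U : Set (Pm m), IsOpen U ∧ (U ∩ imageSet m X α).Nonempty ∧
    ∀ y ∈ U ∩ imageSet m X α, (fibre m X α y).Finite

/-- `α : X ⇢ closure (α(X))` is dominant of degree exactly `k` : the general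
fibre consists of `k` points. -/
def HasDegree (m : ℕ) (X : Set (Pm m)) (α : PN m) (k : ℕ) : Prop :=
  ∃ U : Set (Pm m), IsOpen U ∧ (U ∩ imageSet m X α).Nonempty ∧
    ∀ y ∈ U ∩ imageSet m X α, (fibre m X α y).Finite ∧ (fibre m X α y).ncard = k

/-- `X ⊆ ℙ^m` is nondegenerate: contained in no hyperplane. -/
def Nondegenerate (m : ℕ) (X : Set (Pm m)) : Prop :=
  ∀ φ : (Fin (m + 1) → ℂ) →ₗ[ℂ] ℂ, (∀ x ∈ X, φ x.rep = 0) → φ = 0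

/-- Zariski closed subsets of a product `ℙ^m × ℙ^m'` : common zero loci of sets
of bihomogeneous polynomials in the two groups of homogeneous coordinates. -/
def IsZarClosed2 {ι κ : Type} [Fintype ι] [Fintype κ] (s : Set (PS ι × PS κ)) : Prop :=
  ∃ T : Set (MvPolynomial (ι ⊕ κ) ℂ),
    (∀ p ∈ T, ∃ d e : ℕ,
      p.IsWeightedHomogeneous (Sum.elim (fun _ => ((1 : ℕ), (0 : ℕ))) (fun _ => (0, 1))) (d, e)) ∧
    s = {q | ∀ p ∈ T, eval (Sum.elim q.1.rep q.2.rep) p = 0}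

/-- The Zariski closure of a subset of the product `ℙ^m × ℙ^m'`. -/
def zclosure2 {ι κ : Type} [Fintype ι] [Fintype κ] (s : Set (PS ι × PS κ)) :
    Set (PS ι × PS κ) :=
  ⋂₀ {C | IsZarClosed2 C ∧ s ⊆ C}

/-- The fibre `Γ_α` over `α` of the universal closed graph
`Γ ⊆ ℙ^N × X × ℙ^m`, defined by the equations `ℓ(v) ∧ w = 0`,
i.e. `ℓ(v)` proportional to `w`. -/
def graphFibre (m : ℕ) (X : Set (Pm m)) (α : PN m) : Set (Pm m × Pm m) :=
  {q | q.1 ∈ X ∧ act m α q.1.rep ∈ Submodule.span ℂ {q.2.rep}}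

/-- The (set-theoretic) graph of the linear rational map `α` restricted to `X`. -/
def graphSet (m : ℕ) (X : Set (Pm m)) (α : PN m) : Set (Pm m × Pm m) :=
  {q | q.1 ∈ X ∧ maps m α q.1 q.2}

section Aux

/-- Membership in the span of a single nonzero vector is detected by the 2×2 minors. -/
lemma mem_span_single_iff {κ : Type} [Fintype κ] {p q : κ → ℂ} (hq : q ≠ 0) :
    p ∈ Submodule.span ℂ {q} ↔ ∀ i j, p i * q j = p j * q i := by
  rw [Submodule.mem_span_singleton]
  constructor
  · rintro ⟨a, rfl⟩ i j
    simp only [Pi.smul_apply, smul_eq_mul]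
    ring
  · intro h
    obtain ⟨k, hk⟩ : ∃ k, q k ≠ 0 := by
      by_contra hc
      push_neg at hc
      exact hq (funext hc)
    refine ⟨p k / q k, funext fun i => ?_⟩
    have hik := h i k
    simp only [Pi.smul_apply, smul_eq_mul]
    field_simp
    linear_combination -hik

lemma isZarClosed_of_isClosed {ι : Type} [Fintype ι] {s : Set (PS ι)}
    (h : IsClosed s) : IsZarClosed s := by
  have h2 : sᶜᶜ ∈ {t : Set (PS ι) | IsZarClosed t} := h.isOpen_compl
  simpa using h2

lemma isWeightedHomogeneous_rename {σ τ : Type} {w : τ → ℕ × ℕ}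
    {p : MvPolynomial σ ℂ} {d : ℕ × ℕ} (f : σ → τ)
    (h : p.IsWeightedHomogeneous (w ∘ f) d) :
    (MvPolynomial.rename f p).IsWeightedHomogeneous w d := by
  intro e he
  obtain ⟨u, rfl, hu⟩ := MvPolynomial.coeff_rename_ne_zero f p e he
  rw [← h hu, Finsupp.weight_apply, Finsupp.weight_apply,
    Finsupp.sum_mapDomain_index (fun b => by simp) (fun b a c => add_smul a c (w b))]
  rfl

lemma isWeightedHomogeneous_pair_of_isHomogeneous {σ : Type} {p : MvPolynomial σ ℂ} {d : ℕ}
    (h : p.IsHomogeneous d) :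
    p.IsWeightedHomogeneous (fun _ : σ => ((1 : ℕ), (0 : ℕ))) (d, 0) := by
  intro e he
  have h1 : Finsupp.weight (1 : σ → ℕ) e = d := h he
  rw [Finsupp.weight_apply] at h1 ⊢
  refine Prod.ext ?_ ?_
  · rw [← h1]
    simp only [Finsupp.sum]
    rw [Prod.fst_sum]
    simp
  · simp only [Finsupp.sum]
    rw [Prod.snd_sum]
    simp

end Aux

/-- Let `X ⊆ ℙ^m` be a nondegenerate closed subvariety of
dimension `n` and `Γ ⊆ ℙ^N × X × ℙ^m` the subscheme defined by `ℓ(v) ∧ w = 0`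
(the closed graph of the universal linear map).  For `α ∈ ℙ^N` the fibre `Γ_α`
equals `Γ(α) ∪ (C_α × ℙ^m)`, where `Γ(α)` is the (Zariski) closed graph of
`α|_X` and `C_α` is the trace on `X` of the center of `α`; moreover
`Γ_α = Γ(α)` if and only if `C_α = ∅`. -/
theorem graphFibre_eq (m n : ℕ) (X : Set (Pm m)) (hXne : X.Nonempty)
    (hXcl : IsClosed X) (hXirr : IsIrreducible X) (hXnd : Nondegenerate m X)
    (hdim : topologicalKrullDim ↥X = ((n : ℕ∞) : WithBot ℕ∞)) :
    ∀ α : PN m,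
      graphFibre m X α =
        zclosure2 (graphSet m X α) ∪ ((center m X α) ×ˢ (Set.univ : Set (Pm m))) ∧
      (graphFibre m X α = zclosure2 (graphSet m X α) ↔ center m X α = ∅) := by
  intro α
  classical
  set w : Fin (m + 1) ⊕ Fin (m + 1) → ℕ × ℕ :=
    Sum.elim (fun _ => ((1 : ℕ), (0 : ℕ))) (fun _ => (0, 1)) with hw
  set L : Fin (m + 1) → MvPolynomial (Fin (m + 1) ⊕ Fin (m + 1)) ℂ :=
    fun i => ∑ j, MvPolynomial.C (α.rep (i, j)) * MvPolynomial.X (Sum.inl j) with hL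
  have hLeval : ∀ (u v : Fin (m + 1) → ℂ) (i : Fin (m + 1)),
      eval (Sum.elim u v) (L i) = act m α u i := by
    intro u v i
    simp [hL, act, map_sum]
  have hLhom : ∀ i, (L i).IsWeightedHomogeneous w ((1 : ℕ), (0 : ℕ)) := by
    intro i
    apply MvPolynomial.IsWeightedHomogeneous.sum
    intro j _
    have := (MvPolynomial.isWeightedHomogeneous_C w (α.rep (i, j))).mul
      (MvPolynomial.isWeightedHomogeneous_X ℂ w (Sum.inl j))
    simpa [hw] using this
  set minor : Fin (m + 1) → Fin (m + 1) → MvPolynomial (Fin (m + 1) ⊕ Fin (m + 1)) ℂ :=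
    fun i j => MvPolynomial.X (Sum.inr i) * L j - MvPolynomial.X (Sum.inr j) * L i with hminor
  have hminoreval : ∀ (u v : Fin (m + 1) → ℂ) (i j : Fin (m + 1)),
      eval (Sum.elim u v) (minor i j) = v i * act m α u j - v j * act m α u i := by
    intro u v i j
    simp [hminor, hLeval u v]
  have hminorhom : ∀ i j, (minor i j).IsWeightedHomogeneous w ((1 : ℕ), (1 : ℕ)) := by
    intro i j
    have h1 : (MvPolynomial.X (Sum.inr i) * L j :
        MvPolynomial (Fin (m + 1) ⊕ Fin (m + 1)) ℂ).IsWeightedHomogeneous w (1, 1) := by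
      have := (MvPolynomial.isWeightedHomogeneous_X ℂ w (Sum.inr i)).mul (hLhom j)
      simpa [hw] using this
    have h2 : (MvPolynomial.X (Sum.inr j) * L i :
        MvPolynomial (Fin (m + 1) ⊕ Fin (m + 1)) ℂ).IsWeightedHomogeneous w (1, 1) := by
      have := (MvPolynomial.isWeightedHomogeneous_X ℂ w (Sum.inr j)).mul (hLhom i)
      simpa [hw] using this
    exact (MvPolynomial.weightedHomogeneousSubmodule ℂ w (1, 1)).sub_mem h1 h2
  obtain ⟨TX, hTXhom, hTXeq⟩ := isZarClosed_of_isClosed hXcl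
  have hGFclosed : IsZarClosed2 (graphFibre m X α) := by
    refine ⟨(MvPolynomial.rename Sum.inl '' TX) ∪ {p | ∃ i j, p = minor i j}, ?_, ?_⟩
    · rintro p (⟨q, hq, rfl⟩ | ⟨i, j, rfl⟩)
      · obtain ⟨d, hd⟩ := hTXhom q hq
        exact ⟨d, 0, isWeightedHomogeneous_rename Sum.inl
          (isWeightedHomogeneous_pair_of_isHomogeneous hd)⟩
      · exact ⟨1, 1, hminorhom i j⟩
    · ext q
      obtain ⟨a, b⟩ := q
      constructor
      · rintro ⟨haX, hsp⟩ p hp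
        rcases hp with ⟨qq, hqq, rfl⟩ | ⟨i, j, rfl⟩
        · rw [MvPolynomial.eval_rename, Sum.elim_comp_inl]
          have haX' : a ∈ {x : Pm m | ∀ p ∈ TX, eval x.rep p = 0} := hTXeq ▸ haX
          exact haX' qq hqq
        · rw [hminoreval]
          have hmm := (mem_span_single_iff (Projectivization.rep_nonzero b)).mp hsp
          rw [sub_eq_zero]
          linear_combination hmm j i
      · intro h
        refine ⟨?_, ?_⟩
        · rw [hTXeq]
          intro p hp
          have := h (MvPolynomial.rename Sum.inl p) (Or.inl ⟨p, hp, rfl⟩)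
          rwa [MvPolynomial.eval_rename, Sum.elim_comp_inl] at this
        · rw [mem_span_single_iff (Projectivization.rep_nonzero b)]
          intro i j
          have hji := h (minor j i) (Or.inr ⟨j, i, rfl⟩)
          rw [hminoreval] at hji
          linear_combination hji
  have hsubGF : graphSet m X α ⊆ graphFibre m X α := by
    intro q hq
    obtain ⟨haX, hne, hb⟩ := hq
    refine ⟨haX, ?_⟩
    obtain ⟨c, hc⟩ := Projectivization.exists_smul_eq_mk_rep ℂ (act m α q.1.rep) hne
    rw [Units.smul_def] at hc
    rw [Submodule.mem_span_singleton]
    refine ⟨(↑c⁻¹ : ℂ), ?_⟩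
    rw [hb, ← hc, smul_smul, Units.inv_mul, one_smul]
  have hzsub : zclosure2 (graphSet m X α) ⊆ graphFibre m X α :=
    Set.sInter_subset_of_mem ⟨hGFclosed, hsubGF⟩
  have hsubz : graphSet m X α ⊆ zclosure2 (graphSet m X α) :=
    Set.subset_sInter fun C hC => hC.2
  have hcent : (center m X α) ×ˢ (Set.univ : Set (Pm m)) ⊆ graphFibre m X α := by
    rintro ⟨a, b⟩ ⟨⟨haX, h0⟩, -⟩
    exact ⟨haX, by rw [h0]; exact Submodule.zero_mem _⟩
  have hGFsub : graphFibre m X α ⊆ graphSet m X α ∪ (center m X α) ×ˢ Set.univ := by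
    rintro ⟨a, b⟩ ⟨haX, hsp⟩
    by_cases h0 : act m α a.rep = 0
    · exact Or.inr ⟨⟨haX, h0⟩, Set.mem_univ _⟩
    · refine Or.inl ⟨haX, h0, ?_⟩
      rw [Submodule.mem_span_singleton] at hsp
      obtain ⟨c, hc⟩ := hsp
      have hc0 : c ≠ 0 := by
        rintro rfl
        rw [zero_smul] at hc
        exact h0 hc.symm
      have hmk : Projectivization.mk ℂ (act m α a.rep) h0
          = Projectivization.mk ℂ b.rep (Projectivization.rep_nonzero b) :=
        (Projectivization.mk_eq_mk_iff ℂ _ _ _ _).mpr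
          ⟨Units.mk0 c hc0, by simpa [Units.smul_def] using hc⟩
      rw [Projectivization.mk_rep] at hmk
      exact hmk.symm
  have hunion : graphFibre m X α =
      zclosure2 (graphSet m X α) ∪ (center m X α) ×ˢ Set.univ := by
    apply Set.Subset.antisymm
    · exact fun q hq => (hGFsub hq).imp (fun h => hsubz h) id
    · exact Set.union_subset hzsub hcent
  refine ⟨hunion, ?_, ?_⟩
  · intro hEq
    by_contra hne
    obtain ⟨x, hxX, hx0⟩ : ∃ x, x ∈ X ∧ act m α x.rep = 0 := by
      obtain ⟨x, hx⟩ := Set.nonempty_iff_ne_empty.mpr hne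
      exact ⟨x, hx.1, hx.2⟩
    set A : Matrix (Fin (m + 1)) (Fin (m + 1)) ℂ := Matrix.of fun i j => α.rep (i, j) with hA
    have hmv : A.mulVec x.rep = 0 := by
      funext i
      have h := congrFun hx0 i
      simpa [Matrix.mulVec, dotProduct, hA, act] using h
    have hdet : A.det = 0 :=
      Matrix.exists_mulVec_eq_zero_iff.mp ⟨x.rep, Projectivization.rep_nonzero x, hmv⟩
    obtain ⟨z, hz0, hzv⟩ : ∃ z, z ≠ 0 ∧ A.transpose.mulVec z = 0 := by
      obtain ⟨z, hz0, hzv⟩ :=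
        Matrix.exists_mulVec_eq_zero_iff (M := A.transpose).mpr
          (by rw [Matrix.det_transpose]; exact hdet)
      exact ⟨z, hz0, hzv⟩
    have hz : ∀ j, ∑ i, z i * α.rep (i, j) = 0 := by
      intro j
      have h := congrFun hzv j
      simpa [Matrix.mulVec, dotProduct, Matrix.transpose_apply, hA, mul_comm] using h
    obtain ⟨i0, hi0⟩ := Function.ne_iff.mp hz0
    obtain ⟨k, hk⟩ := Function.ne_iff.mp (Projectivization.rep_nonzero x)
    have hi0' : z i0 ≠ 0 := by simpa using hi0
    have hk' : x.rep k ≠ 0 := by simpa using hk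
    have hsingle : (Pi.single i0 1 : Fin (m + 1) → ℂ) ≠ 0 := by
      intro hcon
      have h1 : (1 : ℂ) = 0 := by simpa using congrFun hcon i0
      exact one_ne_zero h1
    set P : MvPolynomial (Fin (m + 1) ⊕ Fin (m + 1)) ℂ :=
      MvPolynomial.X (Sum.inl k) * ∑ i, MvPolynomial.C (z i) * MvPolynomial.X (Sum.inr i)
      with hP
    have hPeval : ∀ (u v : Fin (m + 1) → ℂ),
        eval (Sum.elim u v) P = u k * ∑ i, z i * v i := by
      intro u v
      simp [hP, map_sum]
    have hPhom : P.IsWeightedHomogeneous w ((1 : ℕ), (1 : ℕ)) := by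
      have h2 : (∑ i, MvPolynomial.C (z i) * MvPolynomial.X (Sum.inr i) :
          MvPolynomial (Fin (m + 1) ⊕ Fin (m + 1)) ℂ).IsWeightedHomogeneous
            w ((0 : ℕ), (1 : ℕ)) := by
        apply MvPolynomial.IsWeightedHomogeneous.sum
        intro i _
        have := (MvPolynomial.isWeightedHomogeneous_C w (z i)).mul
          (MvPolynomial.isWeightedHomogeneous_X ℂ w (Sum.inr i))
        simpa [hw] using this
      have := (MvPolynomial.isWeightedHomogeneous_X ℂ w (Sum.inl k)).mul h2
      simpa [hw] using this
    have hPZ : IsZarClosed2 {q : Pm m × Pm m | eval (Sum.elim q.1.rep q.2.rep) P = 0} := by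
      refine ⟨{P}, ?_, ?_⟩
      · rintro p hp
        rw [Set.mem_singleton_iff] at hp
        exact ⟨1, 1, hp ▸ hPhom⟩
      · ext q
        simp
    have hPsub : graphSet m X α ⊆
        {q : Pm m × Pm m | eval (Sum.elim q.1.rep q.2.rep) P = 0} := by
      intro q hq
      obtain ⟨haX, hne, hb⟩ := hq
      obtain ⟨c, hc⟩ := Projectivization.exists_smul_eq_mk_rep ℂ (act m α q.1.rep) hne
      rw [Units.smul_def] at hc
      show eval (Sum.elim q.1.rep q.2.rep) P = 0
      rw [hPeval]
      have hzero : ∑ i, z i * q.2.rep i = 0 := by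
        rw [hb, ← hc]
        set a := q.1
        calc ∑ i, z i * ((c : ℂ) • act m α a.rep) i
            = ∑ i, ∑ j, (c : ℂ) * (a.rep j * (z i * α.rep (i, j))) := by
              refine Finset.sum_congr rfl fun i _ => ?_
              simp only [Pi.smul_apply, smul_eq_mul, act, Finset.mul_sum]
              exact Finset.sum_congr rfl fun j _ => by ring
          _ = ∑ j, ∑ i, (c : ℂ) * (a.rep j * (z i * α.rep (i, j))) := Finset.sum_comm
          _ = ∑ j, (c : ℂ) * a.rep j * ∑ i, z i * α.rep (i, j) := by
              refine Finset.sum_congr rfl fun j _ => ?_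
              rw [Finset.mul_sum]
              exact Finset.sum_congr rfl fun i _ => by ring
          _ = 0 := by simp [hz]
      rw [hzero, mul_zero]
    obtain ⟨c, hc⟩ := Projectivization.exists_smul_eq_mk_rep ℂ (Pi.single i0 1) hsingle
    rw [Units.smul_def] at hc
    set y : Pm m := Projectivization.mk ℂ (Pi.single i0 1) hsingle with hy
    have hxy : (x, y) ∈ graphFibre m X α :=
      ⟨hxX, by rw [hx0]; exact Submodule.zero_mem _⟩
    rw [hEq] at hxy
    have hmem : eval (Sum.elim x.rep y.rep) P = 0 := hxy _ ⟨hPZ, hPsub⟩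
    rw [hPeval] at hmem
    have hsum : ∑ i, z i * y.rep i = z i0 * (c : ℂ) := by
      rw [← hc]
      simp [Pi.single_apply, mul_ite, mul_comm, Finset.sum_ite_eq']
    rw [hsum] at hmem
    exact (mul_ne_zero hk' (mul_ne_zero hi0' c.ne_zero)) hmem
  · intro hC
    rw [hunion, hC]
    simp
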